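/- Let K ⊆ R^d be a polyhedral cone that is self-dual with respect to an inner product ⟨·,·⟩, and suppose K = K₁ + K₂ where K₁, K₂ are nonzero closed convex cones with span(K₁) ∩ span(K₂) = {0}. Then K₁ = K ∩ K₂^⊥, and in particular K₁ and K₂ are orthogonal with respect to ⟨·,·⟩. -/

import Mathlib

open Matrix Pointwise

/-- A polyhedral cone: the cone of nonnegative combinations of finitely many vectors. -/
def IsPolyhedralCone {d : ℕ} (K : Set (Fin d → ℝ)) : Prop :=
  ∃ (n : ℕ) (v : Fin n → (Fin d → ℝ)),
    K = {x | ∃ c : Fin n → ℝ, (∀ i, 0 ≤ c i) ∧ x = ∑ i, c i • v i}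

lemma aux_sum_closed {d : ℕ} (L₁ L₂ : Submodule ℝ (Fin d → ℝ)) (h : L₁ ⊓ L₂ = ⊥)
    (C D : Set (Fin d → ℝ)) (hC : IsClosed C) (hD : IsClosed D)
    (hCL : C ⊆ (L₁ : Set (Fin d → ℝ))) (hDL : D ⊆ (L₂ : Set (Fin d → ℝ))) :
    IsClosed (C + D) := by
  let f : (L₁ × L₂) →ₗ[ℝ] (Fin d → ℝ) := L₁.subtype.coprod L₂.subtype
  have hker : LinearMap.ker f = ⊥ := by
    rw [LinearMap.ker_eq_bot']
    rintro ⟨a, b⟩ hab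
    have hab' : (a : Fin d → ℝ) + b = 0 := hab
    have ha : (a : Fin d → ℝ) ∈ L₁ ⊓ L₂ := by
      refine ⟨a.2, ?_⟩
      have hav : (a : Fin d → ℝ) = -(b : Fin d → ℝ) := by
        rw [eq_neg_iff_add_eq_zero]; exact hab'
      rw [hav]; exact neg_mem b.2
    rw [h] at ha
    have ha0 : (a : Fin d → ℝ) = 0 := ha
    have hb0 : (b : Fin d → ℝ) = 0 := by rw [ha0, zero_add] at hab'; exact hab'
    ext <;> simp_all
  have hemb := LinearMap.isClosedEmbedding_of_injective (f := f) hker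
  have himg : C + D = f '' ((Subtype.val ⁻¹' C) ×ˢ (Subtype.val ⁻¹' D)) := by
    ext z
    constructor
    · rintro ⟨a, ha, b, hb, rfl⟩
      exact ⟨(⟨a, hCL ha⟩, ⟨b, hDL hb⟩), ⟨ha, hb⟩, rfl⟩
    · rintro ⟨⟨a, b⟩, ⟨ha, hb⟩, rfl⟩
      exact ⟨a, ha, b, hb, rfl⟩
  rw [himg]
  exact hemb.isClosedMap _
    ((hC.preimage continuous_subtype_val).prod (hD.preimage continuous_subtype_val))

lemma aux_sep {d : ℕ} (A : Matrix (Fin d) (Fin d) ℝ) (hA : A.PosDef)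
    (S : Set (Fin d → ℝ)) (hconv : Convex ℝ S) (hclosed : IsClosed S)
    (hcone : ∀ c : ℝ, 0 ≤ c → ∀ s ∈ S, c • s ∈ S) (h0 : (0 : Fin d → ℝ) ∈ S)
    {z : Fin d → ℝ} (hz : z ∉ S) :
    ∃ w, (∀ s ∈ S, 0 ≤ w ⬝ᵥ A.mulVec s) ∧ w ⬝ᵥ A.mulVec z < 0 := by
  obtain ⟨f, u, hfs, hfz⟩ := geometric_hahn_banach_closed_point hconv hclosed hz
  have hu : 0 < u := by simpa using hfs 0 h0
  have hfs' : ∀ s ∈ S, f s ≤ 0 := by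
    intro s hs
    by_contra hpos
    push_neg at hpos
    have h2 := hfs (((u + 1) / f s) • s) (hcone _ (by positivity) s hs)
    rw [_root_.map_smul, smul_eq_mul, div_mul_cancel₀ _ hpos.ne'] at h2
    linarith
  set c : Fin d → ℝ := fun i => f (fun j => if i = j then 1 else 0) with hc
  have hf : ∀ x : Fin d → ℝ, f x = x ⬝ᵥ c := by
    intro x
    conv_lhs => rw [pi_eq_sum_univ x]
    rw [map_sum]
    simp only [_root_.map_smul, smul_eq_mul]
    rfl
  have hdet : IsUnit (Aᵀ).det := by
    rw [Matrix.det_transpose]; exact hA.det_pos.ne'.isUnit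
  set w : Fin d → ℝ := -((Aᵀ)⁻¹ *ᵥ c) with hw
  have hwx : ∀ x : Fin d → ℝ, w ⬝ᵥ A *ᵥ x = -(f x) := by
    intro x
    rw [Matrix.dotProduct_mulVec, hf]
    have : w ᵥ* A = -c := by
      have h1 : w ᵥ* A = Aᵀ *ᵥ w := (Matrix.mulVec_transpose A w).symm
      rw [h1, hw, Matrix.mulVec_neg, Matrix.mulVec_mulVec, Matrix.mul_nonsing_inv _ hdet,
        Matrix.one_mulVec]
    rw [this]
    simp [neg_dotProduct, dotProduct_comm]
  refine ⟨w, fun s hs => ?_, ?_⟩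
  · rw [hwx]; linarith [hfs' s hs]
  · rw [hwx]; linarith

/-- If `K ⊆ ℝ^d` is a polyhedral cone, self-dual with respect to the inner
product `⟨x,y⟩ = xᵀ A y`, and `K = K₁ + K₂` with `K₁, K₂` nonzero closed convex cones
whose spans intersect trivially, then `K₁ = K ∩ K₂^⊥`; in particular `K₁` and `K₂` are
orthogonal for that inner product. -/
theorem summand_eq_inter_orthogonal_of_selfDual
    {d : ℕ} (K K₁ K₂ : Set (Fin d → ℝ))
    (hpoly : IsPolyhedralCone K)
    (A : Matrix (Fin d) (Fin d) ℝ) (hA : A.PosDef)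
    (hsd : K = {y : Fin d → ℝ | ∀ x ∈ K, 0 ≤ x ⬝ᵥ A.mulVec y})
    (hK₁closed : IsClosed K₁) (hK₁conv : Convex ℝ K₁)
    (hK₁cone : ∀ (c : ℝ), 0 ≤ c → ∀ x ∈ K₁, c • x ∈ K₁)
    (hK₁ne : K₁.Nonempty) (hK₁nz : K₁ ≠ {0})
    (hK₂closed : IsClosed K₂) (hK₂conv : Convex ℝ K₂)
    (hK₂cone : ∀ (c : ℝ), 0 ≤ c → ∀ x ∈ K₂, c • x ∈ K₂)
    (hK₂ne : K₂.Nonempty) (hK₂nz : K₂ ≠ {0})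
    (hsum : K = K₁ + K₂)
    (hspan : Submodule.span ℝ K₁ ⊓ Submodule.span ℝ K₂ = ⊥) :
    K₁ = K ∩ {x : Fin d → ℝ | ∀ y ∈ K₂, x ⬝ᵥ A.mulVec y = 0} ∧
      ∀ x ∈ K₁, ∀ y ∈ K₂, x ⬝ᵥ A.mulVec y = 0 := by
  classical
  set L₁ := Submodule.span ℝ K₁ with hL₁def
  set L₂ := Submodule.span ℝ K₂ with hL₂def
  obtain ⟨a₀, ha₀⟩ := hK₁ne
  obtain ⟨b₀, hb₀⟩ := hK₂ne
  have h0₁ : (0 : Fin d → ℝ) ∈ K₁ := by simpa using hK₁cone 0 le_rfl a₀ ha₀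
  have h0₂ : (0 : Fin d → ℝ) ∈ K₂ := by simpa using hK₂cone 0 le_rfl b₀ hb₀
  have hK₁K : K₁ ⊆ K := fun x hx => hsum ▸ ⟨x, hx, 0, h0₂, add_zero x⟩
  have hK₂K : K₂ ⊆ K := fun x hx => hsum ▸ ⟨0, h0₁, x, hx, zero_add x⟩
  have h0K : (0 : Fin d → ℝ) ∈ K := hK₁K h0₁
  have hK₁L : K₁ ⊆ (L₁ : Set (Fin d → ℝ)) := Submodule.subset_span
  have hK₂L : K₂ ⊆ (L₂ : Set (Fin d → ℝ)) := Submodule.subset_span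
  have hAT : Aᵀ = A := by
    ext i j
    conv_rhs => rw [← hA.1]
    simp [Matrix.conjTranspose_apply]
  have hsymm : ∀ x y : Fin d → ℝ, x ⬝ᵥ A *ᵥ y = y ⬝ᵥ A *ᵥ x := by
    intro x y
    rw [Matrix.dotProduct_mulVec x A y, ← Matrix.mulVec_transpose, hAT,
      dotProduct_comm]
  have hposdef : ∀ x : Fin d → ℝ, x ⬝ᵥ A *ᵥ x ≤ 0 → x = 0 := by
    intro x hx
    by_contra hne
    have := hA.dotProduct_mulVec_pos hne
    simp only [star_trivial] at this
    linarith
  have hdual : ∀ y ∈ K, ∀ x ∈ K, 0 ≤ x ⬝ᵥ A.mulVec y := by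
    intro y hy
    rw [hsd] at hy
    exact hy
  set T₁ : Set (Fin d → ℝ) := {x | ∀ y ∈ K₂, x ⬝ᵥ A.mulVec y = 0} with hT₁def
  set T₂ : Set (Fin d → ℝ) := {x | ∀ y ∈ K₁, x ⬝ᵥ A.mulVec y = 0} with hT₂def
  set C₁ := K ∩ T₁ with hC₁def
  set C₂ := K ∩ T₂ with hC₂def
  -- C₁ ⊆ K₁, C₂ ⊆ K₂
  have hC₁K₁ : C₁ ⊆ K₁ := by
    rintro x ⟨hxK, hxT⟩
    rw [hsum] at hxK
    obtain ⟨x₁, hx₁, x₂, hx₂, rfl⟩ := hxK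
    have h1 : (x₁ + x₂) ⬝ᵥ A *ᵥ x₂ = 0 := hxT x₂ hx₂
    rw [add_dotProduct] at h1
    have h2 : 0 ≤ x₁ ⬝ᵥ A *ᵥ x₂ := hdual x₂ (hK₂K hx₂) x₁ (hK₁K hx₁)
    have h3 : x₂ = 0 := hposdef x₂ (by linarith)
    rw [h3]; simpa using hx₁
  have hC₂K₂ : C₂ ⊆ K₂ := by
    rintro x ⟨hxK, hxT⟩
    rw [hsum] at hxK
    obtain ⟨x₁, hx₁, x₂, hx₂, rfl⟩ := hxK
    have h1 : (x₁ + x₂) ⬝ᵥ A *ᵥ x₁ = 0 := hxT x₁ hx₁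
    rw [add_dotProduct] at h1
    have h2 : 0 ≤ x₂ ⬝ᵥ A *ᵥ x₁ := hdual x₁ (hK₁K hx₁) x₂ (hK₂K hx₂)
    have h3 : x₁ = 0 := hposdef x₁ (by linarith)
    rw [h3]; simpa using hx₂
  -- closedness / convexity / cone facts
  have hKclosed : IsClosed K := by
    rw [hsum]; exact aux_sum_closed L₁ L₂ hspan K₁ K₂ hK₁closed hK₂closed hK₁L hK₂L
  have hKconv : Convex ℝ K := by rw [hsum]; exact hK₁conv.add hK₂conv
  have hTclosed : ∀ (S : Set (Fin d → ℝ)), IsClosed {x : Fin d → ℝ | ∀ y ∈ S, x ⬝ᵥ A.mulVec y = 0} := by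
    intro S
    have : {x : Fin d → ℝ | ∀ y ∈ S, x ⬝ᵥ A.mulVec y = 0} =
        ⋂ y ∈ S, {x : Fin d → ℝ | x ⬝ᵥ A.mulVec y = 0} := by
      ext x; simp
    rw [this]
    refine isClosed_biInter fun y _ => ?_
    have hcont : Continuous fun x : Fin d → ℝ => x ⬝ᵥ A.mulVec y := by
      simp only [dotProduct]
      exact continuous_finset_sum _ fun i _ => (continuous_apply i).mul continuous_const
    exact isClosed_eq hcont continuous_const
  have hTconv : ∀ (S : Set (Fin d → ℝ)), Convex ℝ {x : Fin d → ℝ | ∀ y ∈ S, x ⬝ᵥ A.mulVec y = 0} := by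
    intro S x hx x' hx' a b _ _ _ y hy
    simp only [add_dotProduct, smul_dotProduct, hx y hy, hx' y hy,
      smul_zero, add_zero]
  have hC₁closed : IsClosed C₁ := hKclosed.inter (hTclosed K₂)
  have hC₂closed : IsClosed C₂ := hKclosed.inter (hTclosed K₁)
  have hC₁conv : Convex ℝ C₁ := hKconv.inter (hTconv K₂)
  have hC₂conv : Convex ℝ C₂ := hKconv.inter (hTconv K₁)
  have hKcone : ∀ c : ℝ, 0 ≤ c → ∀ x ∈ K, c • x ∈ K := by
    rw [hsum]
    rintro c hc x ⟨p, hp, q, hq, rfl⟩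
    exact ⟨c • p, hK₁cone c hc p hp, c • q, hK₂cone c hc q hq, (smul_add c p q).symm⟩
  have hC₁cone : ∀ c : ℝ, 0 ≤ c → ∀ x ∈ C₁, c • x ∈ C₁ := by
    rintro c hc x ⟨hxK, hxT⟩
    refine ⟨hKcone c hc x hxK, fun y hy => ?_⟩
    rw [smul_dotProduct, hxT y hy, smul_zero]
  have hC₂cone : ∀ c : ℝ, 0 ≤ c → ∀ x ∈ C₂, c • x ∈ C₂ := by
    rintro c hc x ⟨hxK, hxT⟩
    refine ⟨hKcone c hc x hxK, fun y hy => ?_⟩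
    rw [smul_dotProduct, hxT y hy, smul_zero]
  have hsumcone : ∀ (S T : Set (Fin d → ℝ)),
      (∀ c : ℝ, 0 ≤ c → ∀ x ∈ S, c • x ∈ S) → (∀ c : ℝ, 0 ≤ c → ∀ x ∈ T, c • x ∈ T) →
      ∀ c : ℝ, 0 ≤ c → ∀ x ∈ S + T, c • x ∈ S + T := by
    rintro S T hS hT c hc x ⟨p, hp, q, hq, rfl⟩
    exact ⟨c • p, hS c hc p hp, c • q, hT c hc q hq, (smul_add c p q).symm⟩
  -- uniqueness of decomposition
  have huniq : ∀ u₁ ∈ L₁, ∀ u₂ ∈ L₂, ∀ v₁ ∈ L₁, ∀ v₂ ∈ L₂,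
      u₁ + u₂ = v₁ + v₂ → u₁ = v₁ ∧ u₂ = v₂ := by
    intro u₁ h1 u₂ h2 v₁ h3 v₂ h4 heq
    have hm : u₁ - v₁ ∈ L₁ ⊓ L₂ := by
      refine ⟨sub_mem h1 h3, ?_⟩
      have h5 : u₁ - v₁ = v₂ - u₂ := by
        rw [sub_eq_sub_iff_add_eq_add, heq, add_comm]
      rw [h5]; exact sub_mem h4 h2
    rw [hspan] at hm
    have h6 : u₁ = v₁ := by
      have : u₁ - v₁ = 0 := hm
      rwa [sub_eq_zero] at this
    refine ⟨h6, ?_⟩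
    rw [h6] at heq
    exact add_left_cancel heq
  -- dual of C₁ is contained in K₁ + L₂ (and symmetrically)
  have hdualC₁ : ∀ w, (∀ s ∈ C₁, 0 ≤ w ⬝ᵥ A.mulVec s) → w ∈ K₁ + (L₂ : Set (Fin d → ℝ)) := by
    intro w hw
    by_contra hnot
    have hclosed' : IsClosed (K₁ + (L₂ : Set (Fin d → ℝ))) :=
      aux_sum_closed L₁ L₂ hspan K₁ L₂ hK₁closed L₂.closed_of_finiteDimensional hK₁L le_rfl
    have hconv' : Convex ℝ (K₁ + (L₂ : Set (Fin d → ℝ))) := hK₁conv.add L₂.convex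
    have hcone' := hsumcone K₁ L₂ hK₁cone (fun c _ x hx => L₂.smul_mem c hx)
    have h0' : (0 : Fin d → ℝ) ∈ K₁ + (L₂ : Set (Fin d → ℝ)) :=
      ⟨0, h0₁, 0, L₂.zero_mem, add_zero 0⟩
    obtain ⟨v, hv1, hv2⟩ := aux_sep A hA _ hconv' hclosed' hcone' h0' hnot
    have hvK : v ∈ K := by
      rw [hsd]
      intro x hx
      rw [hsum] at hx
      obtain ⟨a, ha, b, hb, rfl⟩ := hx
      have hmem : a + b ∈ K₁ + (L₂ : Set (Fin d → ℝ)) := ⟨a, ha, b, hK₂L hb, rfl⟩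
      rw [hsymm]
      exact hv1 _ hmem
    have hvT : v ∈ T₁ := by
      intro y hy
      have hyL : y ∈ (L₂ : Set (Fin d → ℝ)) := hK₂L hy
      have hp : 0 ≤ v ⬝ᵥ A.mulVec y := hv1 y ⟨0, h0₁, y, hyL, zero_add y⟩
      have hn : 0 ≤ v ⬝ᵥ A.mulVec (-y) := hv1 (-y) ⟨0, h0₁, -y, L₂.neg_mem hyL, zero_add _⟩
      rw [Matrix.mulVec_neg, dotProduct_neg] at hn
      linarith
    have hcontr := hw v ⟨hvK, hvT⟩
    rw [hsymm] at hcontr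
    linarith
  have hdualC₂ : ∀ w, (∀ s ∈ C₂, 0 ≤ w ⬝ᵥ A.mulVec s) → w ∈ K₂ + (L₁ : Set (Fin d → ℝ)) := by
    intro w hw
    by_contra hnot
    have hclosed' : IsClosed (K₂ + (L₁ : Set (Fin d → ℝ))) :=
      aux_sum_closed L₂ L₁ (by rw [inf_comm]; exact hspan) K₂ L₁ hK₂closed
        L₁.closed_of_finiteDimensional hK₂L le_rfl
    have hconv' : Convex ℝ (K₂ + (L₁ : Set (Fin d → ℝ))) := hK₂conv.add L₁.convex
    have hcone' := hsumcone K₂ L₁ hK₂cone (fun c _ x hx => L₁.smul_mem c hx)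
    have h0' : (0 : Fin d → ℝ) ∈ K₂ + (L₁ : Set (Fin d → ℝ)) :=
      ⟨0, h0₂, 0, L₁.zero_mem, add_zero 0⟩
    obtain ⟨v, hv1, hv2⟩ := aux_sep A hA _ hconv' hclosed' hcone' h0' hnot
    have hvK : v ∈ K := by
      rw [hsd]
      intro x hx
      rw [hsum] at hx
      obtain ⟨a, ha, b, hb, rfl⟩ := hx
      have hmem : a + b ∈ K₂ + (L₁ : Set (Fin d → ℝ)) := ⟨b, hb, a, hK₁L ha, add_comm b a⟩
      rw [hsymm]
      exact hv1 _ hmem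
    have hvT : v ∈ T₂ := by
      intro y hy
      have hyL : y ∈ (L₁ : Set (Fin d → ℝ)) := hK₁L hy
      have hp : 0 ≤ v ⬝ᵥ A.mulVec y := hv1 y ⟨0, h0₂, y, hyL, zero_add y⟩
      have hn : 0 ≤ v ⬝ᵥ A.mulVec (-y) := hv1 (-y) ⟨0, h0₂, -y, L₁.neg_mem hyL, zero_add _⟩
      rw [Matrix.mulVec_neg, dotProduct_neg] at hn
      linarith
    have hcontr := hw v ⟨hvK, hvT⟩
    rw [hsymm] at hcontr
    linarith
  -- 0 ∈ C₁, C₂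
  have h0C₁ : (0 : Fin d → ℝ) ∈ C₁ := ⟨h0K, fun y _ => by simp⟩
  have h0C₂ : (0 : Fin d → ℝ) ∈ C₂ := ⟨h0K, fun y _ => by simp⟩
  -- main inclusion K ⊆ C₁ + C₂
  have hsub : K ⊆ C₁ + C₂ := by
    intro x hx
    by_contra hnot
    have hCCclosed : IsClosed (C₁ + C₂) :=
      aux_sum_closed L₁ L₂ hspan C₁ C₂ hC₁closed hC₂closed
        (fun z hz => hK₁L (hC₁K₁ hz)) (fun z hz => hK₂L (hC₂K₂ hz))
    have hCCconv : Convex ℝ (C₁ + C₂) := hC₁conv.add hC₂conv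
    have hCCcone := hsumcone C₁ C₂ hC₁cone hC₂cone
    have h0CC : (0 : Fin d → ℝ) ∈ C₁ + C₂ := ⟨0, h0C₁, 0, h0C₂, add_zero 0⟩
    obtain ⟨w, hw1, hw2⟩ := aux_sep A hA _ hCCconv hCCclosed hCCcone h0CC hnot
    have hw₁ := hdualC₁ w (fun s hs => hw1 s ⟨s, hs, 0, h0C₂, add_zero s⟩)
    have hw₂ := hdualC₂ w (fun s hs => hw1 s ⟨0, h0C₁, s, hs, zero_add s⟩)
    obtain ⟨a, haK₁, m, hmL₂, heq1⟩ := hw₁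
    obtain ⟨b, hbK₂, n, hnL₁, heq2⟩ := hw₂
    have heq1' : a + m = w := heq1
    have heq2' : b + n = w := heq2
    have hun := huniq a (hK₁L haK₁) m hmL₂ n hnL₁ b (hK₂L hbK₂)
      (by rw [heq1', ← heq2']; exact add_comm b n)
    have hwK : w ∈ K := by
      rw [hsum]
      exact ⟨a, haK₁, b, hbK₂, by rw [← hun.2]; exact heq1'⟩
    have := hdual x hx w hwK
    linarith
  -- conclude
  have hmain : K₁ = C₁ := by
    apply Set.Subset.antisymm
    · intro x hx
      obtain ⟨c₁, hc₁, c₂, hc₂, heq⟩ := hsub (hK₁K hx)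
      have heq' : c₁ + c₂ = x := heq
      have hun := huniq c₁ (hK₁L (hC₁K₁ hc₁)) c₂ (hK₂L (hC₂K₂ hc₂)) x (hK₁L hx) 0
        L₂.zero_mem (by rw [heq', add_zero])
      rw [← hun.1]; exact hc₁
    · exact hC₁K₁
  refine ⟨hmain, fun x hx y hy => ?_⟩
  have := hmain ▸ hx
  exact this.2 y hy
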